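/- Let f : ℝ² → ℝ be four times continuously differentiable with compact support, and suppose there exists a polynomial p in two variables of total degree at most 2 such that (Δ (Δ f)) x = p(x) for all x ∈ ℝ². Then f is identically zero. -/

import Mathlib

set_option maxHeartbeats 1000000

open MeasureTheory Real Complex Filter Bornology
open scoped FourierTransform RealInnerProductSpace

/-- The Laplacian of `f : ℝ² → ℝ`: the trace of the Hessian, i.e. the sum of the
pure second partial derivatives. -/
noncomputable def lap (f : EuclideanSpace ℝ (Fin 2) → ℝ)
    (x : EuclideanSpace ℝ (Fin 2)) : ℝ :=
  ∑ i : Fin 2,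
    iteratedFDeriv ℝ 2 f x ![EuclideanSpace.single i 1, EuclideanSpace.single i 1]

abbrev E2 := EuclideanSpace ℝ (Fin 2)

lemma hcs_harmonic_zero (h : E2 → ℝ) (hh : ContDiff ℝ 2 h)
    (hs : HasCompactSupport h) (hlap : ∀ x, lap h x = 0) : ∀ x, h x = 0 := by
  set hc : E2 → ℂ := fun x => (h x : ℂ) with hc_def
  have hcomp : hc = (Complex.ofRealCLM : ℝ →L[ℝ] ℂ) ∘ h := rfl
  have hch : ContDiff ℝ 2 hc := Complex.ofRealCLM.contDiff.comp hh
  have hsc : HasCompactSupport hc := by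
    rw [hcomp]; exact hs.comp_left (by simp)
  have hint : ∀ n : ℕ, (n : ℕ∞) ≤ 2 → Integrable (iteratedFDeriv ℝ n hc) := by
    intro n hn
    exact (hch.continuous_iteratedFDeriv (by exact_mod_cast hn)).integrable_of_hasCompactSupport
      (hsc.iteratedFDeriv n)
  have hci : Integrable hc := hch.continuous.integrable_of_hasCompactSupport hsc
  -- the complexified Laplacian vanishes
  have hlapc : ∀ v, ∑ i : Fin 2, iteratedFDeriv ℝ 2 hc v
      ![EuclideanSpace.single i 1, EuclideanSpace.single i 1] = 0 := by
    intro v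
    have hterm : ∀ i : Fin 2, iteratedFDeriv ℝ 2 hc v
        ![EuclideanSpace.single i 1, EuclideanSpace.single i 1]
        = ((iteratedFDeriv ℝ 2 h v
            ![EuclideanSpace.single i 1, EuclideanSpace.single i 1] : ℝ) : ℂ) := by
      intro i
      rw [hcomp, Complex.ofRealCLM.iteratedFDeriv_comp_left hh.contDiffAt le_rfl]
      rfl
    rw [Finset.sum_congr rfl fun i _ => hterm i, ← Complex.ofReal_sum]
    norm_cast
    exact hlap v
  -- Fourier transform of the second derivative
  have hFder : 𝓕 (iteratedFDeriv ℝ 2 hc)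
      = fun w => VectorFourier.fourierPowSMulRight (-innerSL ℝ) (𝓕 hc) w 2 :=
    Real.fourier_iteratedFDeriv (N := 2) hch hint le_rfl
  have key : ∀ ξ : E2, ξ ≠ 0 → 𝓕 hc ξ = 0 := by
    intro ξ hξ
    have hgi : ∀ i : Fin 2, Integrable (fun x => iteratedFDeriv ℝ 2 hc x
        ![EuclideanSpace.single i 1, EuclideanSpace.single i 1]) := by
      intro i
      exact (ContinuousMultilinearMap.apply ℝ (fun _ : Fin 2 => E2) ℂ
        ![EuclideanSpace.single i 1, EuclideanSpace.single i 1]).integrable_comp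
        (hint 2 le_rfl)
    have hS : ∑ i : Fin 2, 𝓕 (iteratedFDeriv ℝ 2 hc) ξ
        ![EuclideanSpace.single i 1, EuclideanSpace.single i 1] = 0 := by
      have happ : ∀ i : Fin 2, 𝓕 (iteratedFDeriv ℝ 2 hc) ξ
          ![EuclideanSpace.single i 1, EuclideanSpace.single i 1]
          = ∫ v : E2, 𝐞 (-⟪v, ξ⟫) • (iteratedFDeriv ℝ 2 hc v
            ![EuclideanSpace.single i 1, EuclideanSpace.single i 1]) := by
        intro i
        rw [Real.fourier_continuousMultilinearMap_apply (hint 2 le_rfl)]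
        rfl
      rw [Finset.sum_congr rfl fun i _ => happ i, ← integral_finset_sum]
      · have hz : ∀ v : E2, ∑ i : Fin 2, 𝐞 (-⟪v, ξ⟫) • (iteratedFDeriv ℝ 2 hc v
            ![EuclideanSpace.single i 1, EuclideanSpace.single i 1]) = 0 := by
          intro v
          rw [← Finset.smul_sum, hlapc v, smul_zero]
        simp only [hz, integral_zero]
      · intro i _
        exact (Real.fourierIntegral_convergent_iff ξ).2 (hgi i)
    rw [hFder] at hS
    simp only [VectorFourier.fourierPowSMulRight_apply, ContinuousLinearMap.neg_apply,
      (show ∀ v w : E2, (innerSL ℝ : E2 →L[ℝ] E2 →L[ℝ] ℝ) v w = ⟪v, w⟫ from fun _ _ => rfl), Fin.prod_univ_two, Matrix.cons_val_zero, Matrix.cons_val_one,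
      Matrix.head_cons, EuclideanSpace.inner_single_right, RCLike.conj_to_real,
      Fin.sum_univ_two, one_mul] at hS
    have hS' : ((-(2 * ↑π * Complex.I)) ^ 2 *
        (((ξ 0 : ℝ) * ξ 0 + (ξ 1 : ℝ) * ξ 1 : ℝ) : ℂ)) * 𝓕 hc ξ = 0 := by
      rw [← hS]
      push_cast
      simp only [smul_smul, Complex.real_smul, smul_eq_mul]
      push_cast
      ring
    have hcoeff : ((-(2 * ↑π * Complex.I)) ^ 2 *
        (((ξ 0 : ℝ) * ξ 0 + (ξ 1 : ℝ) * ξ 1 : ℝ) : ℂ)) ≠ 0 := by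
      apply mul_ne_zero
      · have hval : (-(2 * (π:ℂ) * Complex.I)) ^ 2 = -(4 * (π:ℂ)^2) := by
          rw [show (-(2 * (π:ℂ) * Complex.I))^2 = (2*(π:ℂ))^2 * Complex.I^2 by ring,
            Complex.I_sq]
          ring
        rw [hval, neg_ne_zero]
        have : ((4 * π^2 : ℝ) : ℂ) = 4 * (π:ℂ)^2 := by push_cast; ring
        rw [← this, Complex.ofReal_ne_zero]
        positivity
      · rw [Complex.ofReal_ne_zero]
        have hcoord : ξ 0 ≠ 0 ∨ ξ 1 ≠ 0 := by
          by_contra hcon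
          push_neg at hcon
          apply hξ
          ext i
          fin_cases i <;> simp [hcon.1, hcon.2]
        rcases hcoord with h1 | h1
        · have : 0 < ξ 0 * ξ 0 + ξ 1 * ξ 1 := by nlinarith [mul_self_nonneg (ξ 1), mul_self_pos.2 h1]
          exact ne_of_gt this
        · have : 0 < ξ 0 * ξ 0 + ξ 1 * ξ 1 := by nlinarith [mul_self_nonneg (ξ 0), mul_self_pos.2 h1]
          exact ne_of_gt this
    exact (mul_eq_zero.mp hS').resolve_left hcoeff
  -- continuity of the Fourier transform
  have hcont : Continuous (𝓕 hc) :=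
    VectorFourier.fourierIntegral_continuous Real.continuous_fourierChar
      (by exact continuous_inner) hci
  have hF0 : 𝓕 hc = 0 := by
    have heq : Set.EqOn (𝓕 hc) 0 {(0 : E2)}ᶜ := fun ξ hξ => key ξ hξ
    exact Continuous.ext_on (dense_compl_singleton 0) hcont continuous_const heq
  have hFint : Integrable (𝓕 hc) := by rw [hF0]; exact integrable_zero _ _ _
  intro x
  have hinv := hci.fourierInv_fourier_eq hFint (hch.continuous.continuousAt (x := x))
  rw [hF0] at hinv
  have h0 : 𝓕⁻ (0 : E2 → ℂ) x = 0 := by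
    simp [Real.fourierInv_eq]
  rw [h0] at hinv
  have hfin : ((h x : ℝ) : ℂ) = 0 := hinv.symm
  exact_mod_cast hfin

lemma lap_contDiff {n : ℕ∞} (f : E2 → ℝ) (hf : ContDiff ℝ (n + 2) f) :
    ContDiff ℝ n (lap f) := by
  apply ContDiff.sum
  intro i _
  exact (ContinuousMultilinearMap.apply ℝ (fun _ : Fin 2 => E2) ℝ
    ![EuclideanSpace.single i 1, EuclideanSpace.single i 1]).contDiff.comp
    (hf.iteratedFDeriv_right le_rfl)

lemma lap_hasCompactSupport (f : E2 → ℝ) (hs : HasCompactSupport f) :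
    HasCompactSupport (lap f) := by
  have : lap f = (fun g : ContinuousMultilinearMap ℝ (fun _ : Fin 2 => E2) ℝ =>
      ∑ i : Fin 2, g ![EuclideanSpace.single i 1, EuclideanSpace.single i 1]) ∘
      iteratedFDeriv ℝ 2 f := rfl
  rw [this]
  exact (hs.iteratedFDeriv 2).comp_left (by simp)

lemma mv_eval_zero (p : MvPolynomial (Fin 2) ℝ) (R : ℝ)
    (h : ∀ x : E2, R < ‖x‖ → MvPolynomial.eval (fun i => x i) p = 0) :
    ∀ y : Fin 2 → ℝ, MvPolynomial.eval y p = 0 := by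
  intro y
  set Q : Polynomial ℝ :=
    MvPolynomial.aeval (fun i : Fin 2 => Polynomial.C (y i) + Polynomial.X) p with hQdef
  have hev : ∀ t : ℝ, Q.eval t = MvPolynomial.eval (fun i => y i + t) p := by
    intro t
    have h2 := AlgHom.congr_fun
      (MvPolynomial.comp_aeval (f := fun i : Fin 2 => Polynomial.C (y i) + Polynomial.X)
        (Polynomial.aeval t)) p
    simp only [AlgHom.comp_apply, map_add, Polynomial.aeval_C, Polynomial.aeval_X,
      Algebra.algebraMap_self, RingHom.id_apply] at h2
    rw [hQdef, ← Polynomial.coe_aeval_eq_eval, h2, ← MvPolynomial.coe_aeval_eq_eval]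
    rfl
  have hroot : ∀ t : ℝ, max R 0 + |y 0| < t → Q.eval t = 0 := by
    intro t ht
    have ht0 : 0 < t := lt_of_le_of_lt (by positivity) ht
    set x : E2 := (WithLp.equiv 2 (Fin 2 → ℝ)).symm (fun i => y i + t) with hx
    have hxi : ∀ i, x i = y i + t := fun i => rfl
    have h0 : |x 0| ≤ ‖x‖ := by
      rw [EuclideanSpace.norm_eq, ← Real.sqrt_sq_eq_abs]
      apply Real.sqrt_le_sqrt
      refine Finset.single_le_sum (f := fun i => ‖x i‖ ^ 2)
        (fun i _ => by positivity) (Finset.mem_univ 0) |>.trans_eq' ?_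
      simp [sq_abs]
    have habs : t ≤ |y 0 + t| + |y 0| := by
      calc t = |t| := (abs_of_pos ht0).symm
      _ = |(y 0 + t) - y 0| := by ring_nf
      _ ≤ |y 0 + t| + |y 0| := abs_sub _ _
    have hnorm : R < ‖x‖ := by
      have hR : R ≤ max R 0 := le_max_left _ _
      have : R < |x 0| := by rw [hxi 0]; linarith
      linarith [this.trans_le h0]
    have hx0 := h x hnorm
    rw [hev t, show (fun i => y i + t) = (fun i => x i) from funext fun i => (hxi i).symm]
    exact hx0
  have hQ0 : Q = 0 := by
    apply Polynomial.eq_zero_of_infinite_isRoot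
    apply Set.Infinite.mono (s := Set.Ioi (max R 0 + |y 0|))
    · intro t ht; exact hroot t ht
    · exact Set.Ioi_infinite _
  have := hev 0
  rw [hQ0] at this
  simpa using this.symm

/-- a `C⁴` compactly supported function on the plane whose
bilaplacian is a polynomial of total degree at most 2 vanishes identically. -/
theorem stmt_8 (f : EuclideanSpace ℝ (Fin 2) → ℝ)
    (hf : ContDiff ℝ 4 f) (hsupp : HasCompactSupport f)
    (p : MvPolynomial (Fin 2) ℝ) (hdeg : p.totalDegree ≤ 2)
    (hp : ∀ x : EuclideanSpace ℝ (Fin 2),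
      lap (lap f) x = MvPolynomial.eval (fun i => x i) p) :
    ∀ x, f x = 0 := by
  have hlf2 : ContDiff ℝ 2 (lap f) :=
    lap_contDiff (n := 2) f (hf.of_le (by norm_num))
  have hq : HasCompactSupport (lap (lap f)) :=
    lap_hasCompactSupport _ (lap_hasCompactSupport _ hsupp)
  obtain ⟨R, hR⟩ := hq.isBounded.subset_closedBall 0
  have hvan : ∀ x : E2, R < ‖x‖ → MvPolynomial.eval (fun i => x i) p = 0 := by
    intro x hx
    rw [← hp x]
    apply image_eq_zero_of_notMem_tsupport
    intro hmem
    have hd := hR hmem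
    rw [Metric.mem_closedBall, dist_zero_right] at hd
    linarith
  have hpz := mv_eval_zero p R hvan
  have hll : ∀ x, lap (lap f) x = 0 := fun x => by rw [hp x]; exact hpz _
  have hlf : ∀ x, lap f x = 0 :=
    hcs_harmonic_zero (lap f) hlf2 (lap_hasCompactSupport f hsupp) hll
  exact hcs_harmonic_zero f (hf.of_le (by norm_num)) hsupp hlf
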